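/- Let α, β be real numbers and let u : ℤ×ℤ → ℝ be square summable. With v := −α D₁,₀ u − β D₂,₀ u and w := −(α²/2) Δ₁ u − (β²/2) Δ₂ u − αβ D₁,₀ D₂,₀ u + ((α²+β²)/8) Δ₁ Δ₂ u, there holds the exact identity: ‖v‖²_{ℓ²(ℤ²)} − 2⟨u;w⟩_{ℓ²(ℤ²)} = −(α²/4)‖Δ₁ u‖²_{ℓ²(ℤ²)} − (β²/4)‖Δ₂ u‖²_{ℓ²(ℤ²)} − ((α²+β²)/4)‖D₁₊ D₂₊ u‖²_{ℓ²(ℤ²)}. -/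

import Mathlib

noncomputable section

/-- Forward difference in the first variable. -/
def D1p (u : ℤ → ℤ → ℝ) : ℤ → ℤ → ℝ := fun j k => u (j + 1) k - u j k
/-- Backward difference in the first variable. -/
def D1m (u : ℤ → ℤ → ℝ) : ℤ → ℤ → ℝ := fun j k => u j k - u (j - 1) k
/-- Forward difference in the second variable. -/
def D2p (u : ℤ → ℤ → ℝ) : ℤ → ℤ → ℝ := fun j k => u j (k + 1) - u j k
/-- Backward difference in the second variable. -/
def D2m (u : ℤ → ℤ → ℝ) : ℤ → ℤ → ℝ := fun j k => u j k - u j (k - 1)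
/-- Centered difference in the first variable. -/
def D10 (u : ℤ → ℤ → ℝ) : ℤ → ℤ → ℝ := fun j k => (D1p u j k + D1m u j k) / 2
/-- Centered difference in the second variable. -/
def D20 (u : ℤ → ℤ → ℝ) : ℤ → ℤ → ℝ := fun j k => (D2p u j k + D2m u j k) / 2
/-- Discrete Laplacian in the first variable. -/
def L1 (u : ℤ → ℤ → ℝ) : ℤ → ℤ → ℝ := D1p (D1m u)
/-- Discrete Laplacian in the second variable. -/
def L2 (u : ℤ → ℤ → ℝ) : ℤ → ℤ → ℝ := D2p (D2m u)

/-- Squared ℓ²(ℤ²) norm. -/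
def sqZ (u : ℤ → ℤ → ℝ) : ℝ := ∑' p : ℤ × ℤ, (u p.1 p.2) ^ 2
/-- ℓ²(ℤ²) scalar product. -/
def ipZ (u v : ℤ → ℤ → ℝ) : ℝ := ∑' p : ℤ × ℤ, u p.1 p.2 * v p.1 p.2

/-- Squared ℓ²(𝓘) norm over the interior indices 𝓘 = ℕ × ℤ of the half-space grid. -/
def sqH (u : ℤ → ℤ → ℝ) : ℝ := ∑' p : ℕ × ℤ, (u (p.1 : ℤ) p.2) ^ 2
/-- ℓ²(𝓘) scalar product over the interior indices 𝓘 = ℕ × ℤ. -/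
def ipH (u v : ℤ → ℤ → ℝ) : ℝ := ∑' p : ℕ × ℤ, u (p.1 : ℤ) p.2 * v (p.1 : ℤ) p.2
/-- Membership in ℋ : square-summable on the half-space grid and satisfying the
extrapolation (Neumann) boundary condition `u (-1) k = u 0 k`. -/
def memH (u : ℤ → ℤ → ℝ) : Prop :=
  (∀ k : ℤ, u (-1) k = u 0 k) ∧ Summable (fun p : ℕ × ℤ => (u (p.1 : ℤ) p.2) ^ 2)

/-- Squared ℓ²(𝔦) norm over the interior indices 𝔦 = ℕ × ℕ of the quarter-space grid. -/
def sqQ (u : ℤ → ℤ → ℝ) : ℝ := ∑' p : ℕ × ℕ, (u (p.1 : ℤ) (p.2 : ℤ)) ^ 2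
/-- ℓ²(𝔦) scalar product over the interior indices 𝔦 = ℕ × ℕ. -/
def ipQ (u v : ℤ → ℤ → ℝ) : ℝ :=
  ∑' p : ℕ × ℕ, u (p.1 : ℤ) (p.2 : ℤ) * v (p.1 : ℤ) (p.2 : ℤ)
/-- Membership in 𝔥 : square-summable on the quarter-space grid, satisfying the
extrapolation boundary conditions on both sides and the corner condition. -/
def memQ (u : ℤ → ℤ → ℝ) : Prop :=
  (∀ k : ℤ, -1 ≤ k → u (-1) k = u 0 k) ∧ (∀ j : ℤ, 0 ≤ j → u j (-1) = u j 0) ∧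
    Summable (fun p : ℕ × ℕ => (u (p.1 : ℤ) (p.2 : ℤ)) ^ 2)

/-- The skew-selfadjoint part `v` in the decomposition of the Lax-Wendroff scheme. -/
def vop (α β : ℝ) (u : ℤ → ℤ → ℝ) : ℤ → ℤ → ℝ :=
  fun j k => -α * D10 u j k - β * D20 u j k
/-- The selfadjoint part `w` in the decomposition of the Lax-Wendroff scheme. -/
def wop (α β : ℝ) (u : ℤ → ℤ → ℝ) : ℤ → ℤ → ℝ :=
  fun j k => -(α ^ 2 / 2) * L1 u j k - (β ^ 2 / 2) * L2 u j k
    - α * β * D10 (D20 u) j k + ((α ^ 2 + β ^ 2) / 8) * L1 (L2 u) j k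


/-- Shifted correlation sum. -/
def Scor (u : ℤ → ℤ → ℝ) (a b : ℤ) : ℝ := ∑' p : ℤ × ℤ, u p.1 p.2 * u (p.1 + a) (p.2 + b)

lemma sq_shift_summable (u : ℤ → ℤ → ℝ) (hu : Summable fun p : ℤ × ℤ => (u p.1 p.2) ^ 2)
    (a b : ℤ) : Summable fun p : ℤ × ℤ => (u (p.1 + a) (p.2 + b)) ^ 2 := by
  have := ((Equiv.addRight a).prodCongr (Equiv.addRight b)).summable_iff.mpr hu
  exact this

lemma mul_shift_summable (u : ℤ → ℤ → ℝ) (hu : Summable fun p : ℤ × ℤ => (u p.1 p.2) ^ 2)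
    (a b c d : ℤ) :
    Summable fun p : ℤ × ℤ => u (p.1 + a) (p.2 + b) * u (p.1 + c) (p.2 + d) := by
  have hle : ∀ p : ℤ × ℤ, |u (p.1 + a) (p.2 + b) * u (p.1 + c) (p.2 + d)| ≤
      (u (p.1 + a) (p.2 + b)) ^ 2 + (u (p.1 + c) (p.2 + d)) ^ 2 := by
    intro p
    rw [abs_mul]
    nlinarith [sq_nonneg (|u (p.1 + a) (p.2 + b)| - |u (p.1 + c) (p.2 + d)|),
      sq_abs (u (p.1 + a) (p.2 + b)), sq_abs (u (p.1 + c) (p.2 + d)),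
      abs_nonneg (u (p.1 + a) (p.2 + b)), abs_nonneg (u (p.1 + c) (p.2 + d))]
  exact (Summable.of_nonneg_of_le (fun p => abs_nonneg _) hle
    ((sq_shift_summable u hu a b).add (sq_shift_summable u hu c d))).of_abs

lemma tsum_mul_shift (u : ℤ → ℤ → ℝ) (a b c d : ℤ) :
    ∑' p : ℤ × ℤ, u (p.1 + a) (p.2 + b) * u (p.1 + c) (p.2 + d) = Scor u (c - a) (d - b) := by
  rw [Scor, ← Equiv.tsum_eq ((Equiv.addRight a).prodCongr (Equiv.addRight b))
      (fun p : ℤ × ℤ => u p.1 p.2 * u (p.1 + (c - a)) (p.2 + (d - b)))]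
  congr 1
  funext p
  have h1 : p.1 + a + (c - a) = p.1 + c := by ring
  have h2 : p.2 + b + (d - b) = p.2 + d := by ring
  simp [Equiv.prodCongr, h1, h2]

abbrev Tm := ℝ × (ℤ × ℤ) × (ℤ × ℤ)

def tf (u : ℤ → ℤ → ℝ) (t : Tm) : ℤ × ℤ → ℝ :=
  fun p => t.1 * (u (p.1 + t.2.1.1) (p.2 + t.2.1.2) * u (p.1 + t.2.2.1) (p.2 + t.2.2.2))

def comboFun (u : ℤ → ℤ → ℝ) (L : List Tm) : ℤ × ℤ → ℝ :=
  fun p => (L.map (fun t => tf u t p)).sum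

lemma summable_tf (u : ℤ → ℤ → ℝ) (hu : Summable fun p : ℤ × ℤ => (u p.1 p.2) ^ 2) (t : Tm) :
    Summable (tf u t) :=
  (mul_shift_summable u hu t.2.1.1 t.2.1.2 t.2.2.1 t.2.2.2).mul_left t.1

lemma summable_combo (u : ℤ → ℤ → ℝ) (hu : Summable fun p : ℤ × ℤ => (u p.1 p.2) ^ 2)
    (L : List Tm) : Summable (comboFun u L) := by
  induction L with
  | nil => exact (summable_zero : Summable fun _ : ℤ × ℤ => (0:ℝ))
  | cons t L ih =>
    have h : comboFun u (t :: L) = fun p => tf u t p + comboFun u L p := by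
      funext p; simp [comboFun]
    rw [h]
    exact (summable_tf u hu t).add ih

lemma tsum_combo (u : ℤ → ℤ → ℝ) (hu : Summable fun p : ℤ × ℤ => (u p.1 p.2) ^ 2)
    (L : List Tm) :
    ∑' p : ℤ × ℤ, comboFun u L p =
      (L.map (fun t => t.1 * Scor u (t.2.2.1 - t.2.1.1) (t.2.2.2 - t.2.1.2))).sum := by
  induction L with
  | nil => simp [comboFun]
  | cons t L ih =>
    have h : comboFun u (t :: L) = fun p => tf u t p + comboFun u L p := by
      funext p; simp [comboFun]
    rw [h, Summable.tsum_add (summable_tf u hu t) (summable_combo u hu L)]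
    simp only [List.map_cons, List.sum_cons, ih]
    congr 1
    simp only [tf]
    rw [tsum_mul_left, tsum_mul_shift]

/-- Lemma 1: exact identity for the skew-selfadjoint/selfadjoint decomposition in ℓ²(ℤ²). -/
theorem lax_wendroff_lemma1 (α β : ℝ) (u : ℤ → ℤ → ℝ)
    (hu : Summable fun p : ℤ × ℤ => (u p.1 p.2) ^ 2) :
    sqZ (vop α β u) - 2 * ipZ u (wop α β u) =
      -(α ^ 2 / 4) * sqZ (L1 u) - (β ^ 2 / 4) * sqZ (L2 u)
        - ((α ^ 2 + β ^ 2) / 4) * sqZ (D1p (D2p u)) := by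
  set γ : ℝ := (α ^ 2 + β ^ 2) / 8 with hγ
  have h1 : sqZ (vop α β u) = ∑' p : ℤ × ℤ, comboFun u
      [(α^2/4,(1,0),(1,0)), (α^2/4,(-1,0),(-1,0)), (-(α^2/2),(-1,0),(1,0)),
       (β^2/4,(0,1),(0,1)), (β^2/4,(0,-1),(0,-1)), (-(β^2/2),(0,-1),(0,1)),
       (α*β/2,(0,1),(1,0)), (-(α*β/2),(0,-1),(1,0)), (-(α*β/2),(-1,0),(0,1)),
       (α*β/2,(-1,0),(0,-1))] p := by
    rw [sqZ]
    congr 1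
    funext p
    simp [comboFun, tf, vop, D10, D20, D1p, D1m, D2p, D2m, sub_eq_add_neg]
    ring
  have h2 : ipZ u (wop α β u) = ∑' p : ℤ × ℤ, comboFun u
      [(-(α^2/2),(0,0),(1,0)), (α^2,(0,0),(0,0)), (-(α^2/2),(-1,0),(0,0)),
       (-(β^2/2),(0,0),(0,1)), (β^2,(0,0),(0,0)), (-(β^2/2),(0,-1),(0,0)),
       (-(α*β/4),(0,0),(1,1)), (α*β/4,(0,0),(1,-1)), (α*β/4,(-1,1),(0,0)),
       (-(α*β/4),(-1,-1),(0,0)),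
       (γ,(0,0),(1,1)), (γ,(0,0),(1,-1)), (γ,(-1,1),(0,0)), (γ,(-1,-1),(0,0)),
       (-(2*γ),(0,0),(1,0)), (-(2*γ),(-1,0),(0,0)), (-(2*γ),(0,0),(0,1)),
       (-(2*γ),(0,-1),(0,0)), (4*γ,(0,0),(0,0))] p := by
    rw [ipZ]
    congr 1
    funext p
    simp [comboFun, tf, wop, L1, L2, D10, D20, D1p, D1m, D2p, D2m, sub_eq_add_neg, hγ]
    ring
  have h3 : sqZ (L1 u) = ∑' p : ℤ × ℤ, comboFun u
      [((1:ℝ),(1,0),(1,0)), (4,(0,0),(0,0)), (1,(-1,0),(-1,0)), (-4,(0,0),(1,0)),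
       (-4,(-1,0),(0,0)), (2,(-1,0),(1,0))] p := by
    rw [sqZ]
    congr 1
    funext p
    simp [comboFun, tf, L1, D1p, D1m, sub_eq_add_neg]
    ring
  have h4 : sqZ (L2 u) = ∑' p : ℤ × ℤ, comboFun u
      [((1:ℝ),(0,1),(0,1)), (4,(0,0),(0,0)), (1,(0,-1),(0,-1)), (-4,(0,0),(0,1)),
       (-4,(0,-1),(0,0)), (2,(0,-1),(0,1))] p := by
    rw [sqZ]
    congr 1
    funext p
    simp [comboFun, tf, L2, D2p, D2m, sub_eq_add_neg]
    ring
  have h5 : sqZ (D1p (D2p u)) = ∑' p : ℤ × ℤ, comboFun u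
      [((1:ℝ),(1,1),(1,1)), (1,(1,0),(1,0)), (1,(0,1),(0,1)), (1,(0,0),(0,0)),
       (-2,(1,0),(1,1)), (-2,(0,1),(1,1)), (2,(0,0),(1,1)), (2,(0,1),(1,0)),
       (-2,(0,0),(1,0)), (-2,(0,0),(0,1))] p := by
    rw [sqZ]
    congr 1
    funext p
    simp [comboFun, tf, D1p, D2p, sub_eq_add_neg]
    ring
  rw [h1, h2, h3, h4, h5, tsum_combo u hu, tsum_combo u hu, tsum_combo u hu,
    tsum_combo u hu, tsum_combo u hu]
  simp only [List.map_cons, List.map_nil, List.sum_cons, List.sum_nil]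
  norm_num [hγ]
  ring
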